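/- arXiv:1610.01848 — 2 statements merged into one kernel-verified Lean document; each statement's English description precedes it below -/
import Mathlib

section
/- In A_n^{q,Λ}(K), each z_i = x_i y_i - y_i x_i is a normal element: z_i · A_n^{q,Λ}(K) = A_n^{q,Λ}(K) · z_i. -/
/-- Defining relations of the "symmetric" multiparameter quantized Weyl algebra
`A_n^{q,Λ}(K)`: generators `Sum.inl i = xᵢ`, `Sum.inr i = yᵢ`. -/
inductive SymWeylRel (K : Type*) [Field K] (n : ℕ) (q : Fin n → K) (lam : Fin n → Fin n → K) :
    FreeAlgebra K (Fin n ⊕ Fin n) → FreeAlgebra K (Fin n ⊕ Fin n) → Prop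
  | xx {i j : Fin n} (h : i < j) : SymWeylRel K n q lam
      (FreeAlgebra.ι K (Sum.inl i) * FreeAlgebra.ι K (Sum.inl j))
      (lam i j • (FreeAlgebra.ι K (Sum.inl j) * FreeAlgebra.ι K (Sum.inl i)))
  | yy {i j : Fin n} (h : i < j) : SymWeylRel K n q lam
      (FreeAlgebra.ι K (Sum.inr j) * FreeAlgebra.ι K (Sum.inr i))
      (lam j i • (FreeAlgebra.ι K (Sum.inr i) * FreeAlgebra.ι K (Sum.inr j)))
  | xy {i j : Fin n} (h : i < j) : SymWeylRel K n q lam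
      (FreeAlgebra.ι K (Sum.inl i) * FreeAlgebra.ι K (Sum.inr j))
      (lam j i • (FreeAlgebra.ι K (Sum.inr j) * FreeAlgebra.ι K (Sum.inl i)))
  | yx {i j : Fin n} (h : i < j) : SymWeylRel K n q lam
      (FreeAlgebra.ι K (Sum.inl j) * FreeAlgebra.ι K (Sum.inr i))
      (lam i j • (FreeAlgebra.ι K (Sum.inr i) * FreeAlgebra.ι K (Sum.inl j)))
  | weyl (i : Fin n) : SymWeylRel K n q lam
      (FreeAlgebra.ι K (Sum.inl i) * FreeAlgebra.ι K (Sum.inr i))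
      (q i • (FreeAlgebra.ι K (Sum.inr i) * FreeAlgebra.ι K (Sum.inl i)) + 1)

/-- The "symmetric" multiparameter quantized Weyl algebra `A_n^{q,Λ}(K)`. -/
abbrev SymWeyl (K : Type*) [Field K] (n : ℕ) (q : Fin n → K) (lam : Fin n → Fin n → K) :=
  RingQuot (SymWeylRel K n q lam)

/-- The generator `xᵢ`. -/
noncomputable def wX (K : Type*) [Field K] (n : ℕ) (q : Fin n → K) (lam : Fin n → Fin n → K)
    (i : Fin n) : SymWeyl K n q lam :=
  RingQuot.mkAlgHom K (SymWeylRel K n q lam) (FreeAlgebra.ι K (Sum.inl i))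

/-- The generator `yᵢ`. -/
noncomputable def wY (K : Type*) [Field K] (n : ℕ) (q : Fin n → K) (lam : Fin n → Fin n → K)
    (i : Fin n) : SymWeyl K n q lam :=
  RingQuot.mkAlgHom K (SymWeylRel K n q lam) (FreeAlgebra.ι K (Sum.inr i))

/-- The normal element `zᵢ = xᵢyᵢ - yᵢxᵢ`. -/
noncomputable def wZ (K : Type*) [Field K] (n : ℕ) (q : Fin n → K) (lam : Fin n → Fin n → K)
    (i : Fin n) : SymWeyl K n q lam :=
  wX K n q lam i * wY K n q lam i - wY K n q lam i * wX K n q lam i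

section Aux

variable {K : Type*} [Field K] {n : ℕ} {q : Fin n → K} {lam : Fin n → Fin n → K}

local notation "X" => wX K n q lam
local notation "Y" => wY K n q lam
local notation "Z" => wZ K n q lam

/-- inverse-smul trick -/
lemma sm_inv {A : Type*} [Ring A] [Module K A] {a b : A} {c c' : K}
    (e : a = c • b) (h : c' * c = 1) : b = c' • a := by
  rw [e, smul_smul, h, one_smul]

lemma relW (i : Fin n) : X i * Y i = q i • (Y i * X i) + 1 := by
  have := RingQuot.mkAlgHom_rel K (SymWeylRel.weyl (q := q) (lam := lam) i)
  simpa [wX, wY, map_mul, map_add, map_smul, map_one] using this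

lemma relXX (hlam : ∀ i j, lam i j * lam j i = 1) {i j : Fin n} (h : j ≠ i) :
    X i * X j = lam i j • (X j * X i) := by
  rcases lt_or_gt_of_ne (Ne.symm h) with hij | hij
  · have := RingQuot.mkAlgHom_rel K (SymWeylRel.xx (K := K) (q := q) (lam := lam) hij)
    simpa [wX, map_mul, map_smul] using this
  · have := RingQuot.mkAlgHom_rel K (SymWeylRel.xx (K := K) (q := q) (lam := lam) hij)
    simp only [map_mul, map_smul] at this
    exact sm_inv (A := SymWeyl K n q lam) this (hlam i j)

lemma relYY (hlam : ∀ i j, lam i j * lam j i = 1) {i j : Fin n} (h : j ≠ i) :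
    Y i * Y j = lam i j • (Y j * Y i) := by
  rcases lt_or_gt_of_ne (Ne.symm h) with hij | hij
  · have := RingQuot.mkAlgHom_rel K (SymWeylRel.yy (K := K) (q := q) (lam := lam) hij)
    simp only [map_mul, map_smul] at this
    exact sm_inv (A := SymWeyl K n q lam) this (hlam i j)
  · have := RingQuot.mkAlgHom_rel K (SymWeylRel.yy (K := K) (q := q) (lam := lam) hij)
    simpa [wY, map_mul, map_smul] using this

lemma relXY (hlam : ∀ i j, lam i j * lam j i = 1) {i j : Fin n} (h : j ≠ i) :
    X i * Y j = lam j i • (Y j * X i) := by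
  rcases lt_or_gt_of_ne (Ne.symm h) with hij | hij
  · have := RingQuot.mkAlgHom_rel K (SymWeylRel.xy (K := K) (q := q) (lam := lam) hij)
    simpa [wX, wY, map_mul, map_smul] using this
  · have := RingQuot.mkAlgHom_rel K (SymWeylRel.yx (K := K) (q := q) (lam := lam) hij)
    simpa [wX, wY, map_mul, map_smul] using this

lemma relYX (hlam : ∀ i j, lam i j * lam j i = 1) {i j : Fin n} (h : j ≠ i) :
    Y i * X j = lam j i • (X j * Y i) := by
  rcases lt_or_gt_of_ne (Ne.symm h) with hij | hij
  · have := RingQuot.mkAlgHom_rel K (SymWeylRel.yx (K := K) (q := q) (lam := lam) hij)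
    simp only [map_mul, map_smul] at this
    exact sm_inv (A := SymWeyl K n q lam) this (hlam j i)
  · have := RingQuot.mkAlgHom_rel K (SymWeylRel.xy (K := K) (q := q) (lam := lam) hij)
    simp only [map_mul, map_smul] at this
    exact sm_inv (A := SymWeyl K n q lam) this (hlam j i)

end Aux
section Aux2

variable {K : Type*} [Field K] {n : ℕ} {q : Fin n → K} {lam : Fin n → Fin n → K}

local notation "X" => wX K n q lam
local notation "Y" => wY K n q lam
local notation "Z" => wZ K n q lam

lemma conj_comm {A : Type*} [Ring A] [Algebra K A] {a b g : A} {c c' : K}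
    (h1 : a * g = c • (g * a)) (h2 : b * g = c' • (g * b)) (hcc : c' * c = 1) :
    (a * b) * g = g * (a * b) := by
  calc a * b * g = a * (c' • (g * b)) := by rw [mul_assoc, h2]
    _ = c' • ((a * g) * b) := by rw [mul_smul_comm, mul_assoc]
    _ = c' • ((c • (g * a)) * b) := by rw [h1]
    _ = (c' * c) • (g * (a * b)) := by rw [smul_mul_assoc, smul_smul, mul_assoc]
    _ = g * (a * b) := by rw [hcc, one_smul]

lemma commZX (hlam : ∀ i j, lam i j * lam j i = 1) {i j : Fin n} (h : j ≠ i) :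
    Z i * X j = X j * Z i := by
  have h1 : (X i * Y i) * X j = X j * (X i * Y i) :=
    conj_comm (relXX hlam h) (relYX hlam h) (hlam j i)
  have h2 : (Y i * X i) * X j = X j * (Y i * X i) :=
    conj_comm (relYX hlam h) (relXX hlam h) (hlam i j)
  simp only [wZ, sub_mul, mul_sub, h1, h2]

lemma commZY (hlam : ∀ i j, lam i j * lam j i = 1) {i j : Fin n} (h : j ≠ i) :
    Z i * Y j = Y j * Z i := by
  have h1 : (X i * Y i) * Y j = Y j * (X i * Y i) :=
    conj_comm (relXY hlam h) (relYY hlam h) (hlam i j)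
  have h2 : (Y i * X i) * Y j = Y j * (Y i * X i) :=
    conj_comm (relYY hlam h) (relXY hlam h) (hlam j i)
  simp only [wZ, sub_mul, mul_sub, h1, h2]

lemma zEq (i : Fin n) : Z i = (q i - 1) • (Y i * X i) + 1 := by
  rw [wZ, relW]
  module

lemma weylXZ (i : Fin n) : X i * Z i = q i • (Z i * X i) := by
  have h1 : X i * (Y i * X i) = q i • (Y i * X i * X i) + X i := by
    rw [← mul_assoc, relW, add_mul, smul_mul_assoc, one_mul]
  rw [zEq, mul_add, add_mul, mul_one, one_mul, mul_smul_comm, smul_mul_assoc, h1]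
  simp only [smul_add, smul_smul, smul_sub, sub_smul, add_smul, one_smul, mul_sub, sub_mul,
    mul_one, one_mul]
  abel_nf

lemma weylZY (i : Fin n) : Z i * Y i = q i • (Y i * Z i) := by
  have h1 : (Y i * X i) * Y i = q i • (Y i * (Y i * X i)) + Y i := by
    rw [mul_assoc, relW, mul_add, mul_smul_comm, mul_one]
  rw [zEq, mul_add, add_mul, mul_one, one_mul, mul_smul_comm, smul_mul_assoc, h1]
  simp only [smul_add, smul_smul, smul_sub, sub_smul, add_smul, one_smul, mul_sub, sub_mul,
    mul_one, one_mul]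
  abel_nf

end Aux2
section Aux3

variable {K : Type*} [Field K] {n : ℕ} {q : Fin n → K} {lam : Fin n → Fin n → K}

local notation "X" => wX K n q lam
local notation "Y" => wY K n q lam
local notation "Z" => wZ K n q lam

noncomputable def scaleHom (hlam : ∀ i j, lam i j * lam j i = 1) (c d : Fin n → K)
    (hcd : ∀ i, c i * d i = 1) :
    SymWeyl K n q lam →ₐ[K] SymWeyl K n q lam :=
  RingQuot.liftAlgHom K ⟨FreeAlgebra.lift K (fun s => Sum.elim (fun j => c j • X j)
      (fun j => d j • Y j) s), by
    intro u v r
    induction r with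
    | @xx i j h =>
      have rel := relXX (q := q) hlam h.ne'
      simp only [map_mul, map_smul, FreeAlgebra.lift_ι_apply, Sum.elim_inl, Sum.elim_inr,
        smul_mul_smul_comm, rel, smul_smul]
      congr 1
      ring
    | @yy i j h =>
      have rel := relYY (q := q) hlam h.ne
      simp only [map_mul, map_smul, FreeAlgebra.lift_ι_apply, Sum.elim_inl, Sum.elim_inr,
        smul_mul_smul_comm, rel, smul_smul]
      congr 1
      ring
    | @xy i j h =>
      have rel := relXY (q := q) hlam h.ne'
      simp only [map_mul, map_smul, FreeAlgebra.lift_ι_apply, Sum.elim_inl, Sum.elim_inr,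
        smul_mul_smul_comm, rel, smul_smul]
      congr 1
      ring
    | @yx i j h =>
      have rel := relYX (q := q) (i := i) (j := j) hlam h.ne'
      have rel' : X j * Y i = lam i j • (Y i * X j) := sm_inv (A := SymWeyl K n q lam) rel (hlam i j)
      simp only [map_mul, map_smul, FreeAlgebra.lift_ι_apply, Sum.elim_inl, Sum.elim_inr,
        smul_mul_smul_comm, rel', smul_smul]
      congr 1
      ring
    | weyl i =>
      have rel := relW (q := q) (lam := lam) i
      simp only [map_mul, map_smul, map_add, map_one, FreeAlgebra.lift_ι_apply, Sum.elim_inl,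
        Sum.elim_inr, smul_mul_smul_comm, rel, smul_smul, smul_add]
      congr 2
      · ring
      · rw [hcd, one_smul]⟩

lemma scaleHom_X (hlam : ∀ i j, lam i j * lam j i = 1) (c d : Fin n → K)
    (hcd : ∀ i, c i * d i = 1) (j : Fin n) :
    scaleHom hlam c d hcd (X j) = c j • X j := by
  rw [wX, scaleHom, RingQuot.liftAlgHom_mkAlgHom_apply, FreeAlgebra.lift_ι_apply, Sum.elim_inl]
  rfl

lemma scaleHom_Y (hlam : ∀ i j, lam i j * lam j i = 1) (c d : Fin n → K)
    (hcd : ∀ i, c i * d i = 1) (j : Fin n) :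
    scaleHom hlam c d hcd (Y j) = d j • Y j := by
  rw [wY, scaleHom, RingQuot.liftAlgHom_mkAlgHom_apply, FreeAlgebra.lift_ι_apply, Sum.elim_inr]
  rfl

lemma key_move (hq : ∀ i, q i ≠ 0) (hlam : ∀ i j, lam i j * lam j i = 1) (i : Fin n)
    (c d : Fin n → K) (hcd : ∀ i, c i * d i = 1)
    (hgenX : ∀ j, Z i * X j = (c j • X j) * Z i)
    (hgenY : ∀ j, Z i * Y j = (d j • Y j) * Z i)
    (a : SymWeyl K n q lam) :
    Z i * a = scaleHom hlam c d hcd a * Z i := by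
  obtain ⟨p, rfl⟩ := RingQuot.mkAlgHom_surjective K (SymWeylRel K n q lam) a
  induction p using FreeAlgebra.induction with
  | grade0 r =>
    rw [AlgHom.commutes, AlgHom.commutes]
    exact (Algebra.commutes r (wZ K n q lam i)).symm
  | grade1 s =>
    rcases s with j | j
    · rw [show RingQuot.mkAlgHom K (SymWeylRel K n q lam) (FreeAlgebra.ι K (Sum.inl j)) = X j
        from rfl, scaleHom_X]
      exact hgenX j
    · rw [show RingQuot.mkAlgHom K (SymWeylRel K n q lam) (FreeAlgebra.ι K (Sum.inr j)) = Y j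
        from rfl, scaleHom_Y]
      exact hgenY j
  | mul a b ha hb =>
    rw [map_mul, map_mul, ← mul_assoc, ha, mul_assoc, hb, mul_assoc]
  | add a b ha hb =>
    rw [map_add, map_add, mul_add, ha, hb, add_mul]

end Aux3
section Aux4

variable {K : Type*} [Field K] {n : ℕ} {q : Fin n → K} {lam : Fin n → Fin n → K}

local notation "X" => wX K n q lam
local notation "Y" => wY K n q lam
local notation "Z" => wZ K n q lam

lemma key_move' (hlam : ∀ i j, lam i j * lam j i = 1) (i : Fin n)
    (c d : Fin n → K) (hcd : ∀ i, c i * d i = 1)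
    (hgenX : ∀ j, X j * Z i = Z i * (c j • X j))
    (hgenY : ∀ j, Y j * Z i = Z i * (d j • Y j))
    (a : SymWeyl K n q lam) :
    a * Z i = Z i * scaleHom hlam c d hcd a := by
  obtain ⟨p, rfl⟩ := RingQuot.mkAlgHom_surjective K (SymWeylRel K n q lam) a
  induction p using FreeAlgebra.induction with
  | grade0 r =>
    rw [AlgHom.commutes, AlgHom.commutes]
    exact Algebra.commutes r (wZ K n q lam i)
  | grade1 s =>
    rcases s with j | j
    · rw [show RingQuot.mkAlgHom K (SymWeylRel K n q lam) (FreeAlgebra.ι K (Sum.inl j)) = X j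
        from rfl, scaleHom_X]
      exact hgenX j
    · rw [show RingQuot.mkAlgHom K (SymWeylRel K n q lam) (FreeAlgebra.ι K (Sum.inr j)) = Y j
        from rfl, scaleHom_Y]
      exact hgenY j
  | mul a b ha hb =>
    rw [map_mul, map_mul, mul_assoc, hb, ← mul_assoc, ha, mul_assoc]
  | add a b ha hb =>
    rw [map_add, map_add, add_mul, ha, hb, mul_add]

end Aux4

theorem stmt4 (K : Type*) [Field K] (n : ℕ) (q : Fin n → K) (lam : Fin n → Fin n → K)
    (hq : ∀ i, q i ≠ 0) (hlam : ∀ i j, lam i j * lam j i = 1)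
    (hlam1 : ∀ i, lam i i = 1)
    (i : Fin n) :
    Set.range (fun a : SymWeyl K n q lam => wZ K n q lam i * a) =
      Set.range (fun a : SymWeyl K n q lam => a * wZ K n q lam i) := by
  have hcd1 : ∀ j, (if j = i then (q i)⁻¹ else 1) * (if j = i then q i else 1) = 1 := by
    intro j; split <;> simp [inv_mul_cancel₀ (hq i)]
  have hcd2 : ∀ j, (if j = i then q i else 1) * (if j = i then (q i)⁻¹ else 1) = 1 := by
    intro j; split <;> simp [mul_inv_cancel₀ (hq i)]
  have hZX : ∀ j, wZ K n q lam i * wX K n q lam j =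
      ((if j = i then (q i)⁻¹ else 1) • wX K n q lam j) * wZ K n q lam i := by
    intro j
    by_cases hji : j = i
    · subst hji
      have e := weylXZ (q := q) (lam := lam) j
      have h2 : wZ K n q lam j * wX K n q lam j =
          (q j)⁻¹ • (wX K n q lam j * wZ K n q lam j) := sm_inv (A := SymWeyl K n q lam) e (inv_mul_cancel₀ (hq j))
      rw [h2, if_pos rfl, smul_mul_assoc]
    · rw [commZX hlam hji, if_neg hji, one_smul]
  have hZY : ∀ j, wZ K n q lam i * wY K n q lam j =
      ((if j = i then q i else 1) • wY K n q lam j) * wZ K n q lam i := by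
    intro j
    by_cases hji : j = i
    · subst hji
      rw [weylZY (q := q) (lam := lam) j, if_pos rfl, smul_mul_assoc]
    · rw [commZY hlam hji, if_neg hji, one_smul]
  have hXZ : ∀ j, wX K n q lam j * wZ K n q lam i =
      wZ K n q lam i * ((if j = i then q i else 1) • wX K n q lam j) := by
    intro j
    by_cases hji : j = i
    · subst hji
      rw [weylXZ (q := q) (lam := lam) j, if_pos rfl, mul_smul_comm]
    · rw [← commZX hlam hji, if_neg hji, one_smul]
  have hYZ : ∀ j, wY K n q lam j * wZ K n q lam i =
      wZ K n q lam i * ((if j = i then (q i)⁻¹ else 1) • wY K n q lam j) := by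
    intro j
    by_cases hji : j = i
    · subst hji
      have e := weylZY (q := q) (lam := lam) j
      have h2 : wY K n q lam j * wZ K n q lam j =
          (q j)⁻¹ • (wZ K n q lam j * wY K n q lam j) := sm_inv (A := SymWeyl K n q lam) e (inv_mul_cancel₀ (hq j))
      rw [h2, if_pos rfl, mul_smul_comm]
    · rw [← commZY hlam hji, if_neg hji, one_smul]
  ext b
  simp only [Set.mem_range]
  constructor
  · rintro ⟨a, rfl⟩
    exact ⟨scaleHom hlam _ _ hcd1 a, (key_move hq hlam i _ _ hcd1 hZX hZY a).symm⟩
  · rintro ⟨a, rfl⟩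
    exact ⟨scaleHom hlam _ _ hcd2 a, (key_move' hlam i _ _ hcd2 hXZ hYZ a).symm⟩
end

section
/- If a K-algebra A has center equal to K, then A is cancellative: for any K-algebra B, an isomorphism A[t] ≅ B[t] of K-algebras implies A ≅ B. -/
open Polynomial

section Aux

variable {K : Type*} [Field K] {B : Type*} [Ring B] [Algebra K B]

lemma aux_commute_sub (u : K) (z : Polynomial B) :
    Commute (X - C (algebraMap K B u)) z := by
  have h1 : (C (algebraMap K B u) : Polynomial B) = algebraMap K (Polynomial B) u := by
    rw [Polynomial.algebraMap_apply]
  refine (commute_X z).sub_left ?_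
  rw [h1]
  exact Algebra.commutes u z

/-- Division with remainder by `X - C c` for a scalar `c`, in a possibly
noncommutative polynomial ring. -/
lemma aux_div (u : K) (p : Polynomial B) :
    ∃ q : Polynomial B, p = (X - C (algebraMap K B u)) * q
      + C (eval₂ (RingHom.id B) (algebraMap K B u) p) := by
  induction p using Polynomial.induction_on' with
  | add p r hp hr =>
    obtain ⟨qp, hqp⟩ := hp
    obtain ⟨qr, hqr⟩ := hr
    refine ⟨qp + qr, ?_⟩
    rw [eval₂_add, map_add]
    calc p + r = ((X - C (algebraMap K B u)) * qp + C (eval₂ (RingHom.id B) (algebraMap K B u) p))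
          + ((X - C (algebraMap K B u)) * qr + C (eval₂ (RingHom.id B) (algebraMap K B u) r)) := by
          rw [← hqp, ← hqr]
      _ = _ := by noncomm_ring
  | monomial n b =>
    set c := algebraMap K B u with hc
    set S := ∑ i ∈ Finset.range n, (X : Polynomial B) ^ i * (C c) ^ (n - 1 - i) with hS
    refine ⟨C b * S, ?_⟩
    have hgeom := (commute_X (C c : Polynomial B)).geom_sum₂_mul n
    rw [eval₂_monomial, RingHom.id_apply, (aux_commute_sub u (C b * S)).eq,
      mul_assoc, hgeom, C_mul, C_pow, mul_sub, sub_add_cancel, C_mul_X_pow_eq_monomial]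

end Aux

theorem stmt8 (K : Type*) [Field K] (A : Type*) [Ring A] [Algebra K A]
    (hcenter : Subalgebra.center K A = ⊥) (B : Type*) [Ring B] [Algebra K B]
    (e : Polynomial A ≃ₐ[K] Polynomial B) :
    Nonempty (A ≃ₐ[K] B) := by
  rcases subsingleton_or_nontrivial B with hB | hB
  · -- trivial case: B (hence everything) is the zero ring
    haveI : Subsingleton (Polynomial A) := e.toEquiv.subsingleton
    haveI hA : Subsingleton A := ⟨fun a b => C_injective (Subsingleton.elim _ _)⟩
    exact ⟨{ toFun := fun _ => 0, invFun := fun _ => 0,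
             left_inv := fun _ => Subsingleton.elim _ _,
             right_inv := fun _ => Subsingleton.elim _ _,
             map_mul' := fun _ _ => Subsingleton.elim _ _,
             map_add' := fun _ _ => Subsingleton.elim _ _,
             commutes' := fun _ => Subsingleton.elim _ _ }⟩
  · haveI hA : Nontrivial A := by
      rcases subsingleton_or_nontrivial A with h | h
      · haveI : Subsingleton (Polynomial B) := e.symm.toEquiv.subsingleton
        exact absurd (Subsingleton.elim (0 : Polynomial B) 1) zero_ne_one
      · exact h
    -- transfer of centrality along e and e.symm
    have hcentBA : ∀ p : Polynomial B, p ∈ Subalgebra.center K (Polynomial B) →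
        e.symm p ∈ Subalgebra.center K (Polynomial A) := by
      intro p hp
      rw [Subalgebra.mem_center_iff] at hp ⊢
      intro y
      calc y * e.symm p = e.symm (e y * p) := by rw [map_mul, e.symm_apply_apply]
        _ = e.symm (p * e y) := by rw [hp]
        _ = e.symm p * y := by rw [map_mul, e.symm_apply_apply]
    have hcentAB : ∀ p : Polynomial A, p ∈ Subalgebra.center K (Polynomial A) →
        e p ∈ Subalgebra.center K (Polynomial B) := by
      intro p hp
      rw [Subalgebra.mem_center_iff] at hp ⊢
      intro y
      calc y * e p = e (e.symm y * p) := by rw [map_mul, e.apply_symm_apply]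
        _ = e (p * e.symm y) := by rw [hp]
        _ = e p * y := by rw [map_mul, e.apply_symm_apply]
    have hXcA : (X : Polynomial A) ∈ Subalgebra.center K (Polynomial A) := by
      rw [Subalgebra.mem_center_iff]
      exact fun b => ((commute_X b).eq).symm
    have hXcB : (X : Polynomial B) ∈ Subalgebra.center K (Polynomial B) := by
      rw [Subalgebra.mem_center_iff]
      exact fun b => ((commute_X b).eq).symm
    -- central elements of A[X] are scalar polynomials
    have hlift : ∀ p : Polynomial A, p ∈ Subalgebra.center K (Polynomial A) →
        ∃ q : Polynomial K, q.map (algebraMap K A) = p := by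
      intro p hp
      rw [← Polynomial.mem_lifts, Polynomial.lifts_iff_coeff_lifts]
      intro n
      have hn : p.coeff n ∈ Subalgebra.center K A := by
        rw [Subalgebra.mem_center_iff] at hp ⊢
        intro b
        have h1 := congrArg (fun q => q.coeff n) (hp (C b))
        simpa [coeff_C_mul, coeff_mul_C] using h1
      rw [hcenter, Algebra.mem_bot] at hn
      exact hn
    obtain ⟨h₀, hh₀⟩ := hlift (e.symm X) (hcentBA X hXcB)
    have hPc : e X ∈ Subalgebra.center K (Polynomial B) := hcentAB X hXcA
    -- the key identity : h₀ (e X) = X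
    have haevalX : aeval (X : Polynomial A) h₀ = e.symm X := by
      have h2 : (aeval (X : Polynomial A) : Polynomial K →ₐ[K] Polynomial A)
          = mapAlgHom (Algebra.ofId K A) := by
        apply Polynomial.algHom_ext
        simp
      rw [h2, ← hh₀]
      rfl
    have key : aeval (e X) h₀ = X := by
      rw [aeval_algHom_apply e X h₀, haevalX, e.apply_symm_apply]
    -- the center of B is commutative with no zero divisors; a degree argument
    -- then shows that h₀ has degree 1
    have hdeg₀ : h₀.natDegree = 1 := by
      set S := Subalgebra.center K B with hSdef
      have hCcent : ∀ z : S, (C (z : B)) ∈ Subalgebra.center K (Polynomial B) := by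
        intro z
        rw [Subalgebra.mem_center_iff]
        intro q
        ext n
        simp only [coeff_mul_C, coeff_C_mul]
        exact Subalgebra.mem_center_iff.mp z.2 _
      have hinjA : Function.Injective (algebraMap K A) := RingHom.injective _
      have hmapinjA : Function.Injective (Polynomial.map (algebraMap K A)) :=
        Polynomial.map_injective _ hinjA
      haveI : NoZeroDivisors S := by
        constructor
        intro z w hzw
        obtain ⟨z₀, hz₀⟩ := hlift _ (hcentBA _ (hCcent z))
        obtain ⟨w₀, hw₀⟩ := hlift _ (hcentBA _ (hCcent w))
        have hvw : (z : B) * (w : B) = 0 := congrArg Subtype.val hzw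
        have hmul : (z₀ * w₀).map (algebraMap K A) = Polynomial.map (algebraMap K A) 0 := by
          rw [Polynomial.map_mul, hz₀, hw₀, ← map_mul e.symm, ← C_mul, hvw]
          simp
        have h0 := hmapinjA hmul
        rcases mul_eq_zero.mp h0 with h | h
        · left
          have hz : e.symm (C (z : B)) = 0 := by rw [← hz₀, h]; simp
          have hC0 : C (z : B) = (0 : Polynomial B) := by
            apply e.symm.injective
            simpa using hz
          exact Subtype.ext (C_injective (by simpa using hC0))
        · right
          have hw : e.symm (C (w : B)) = 0 := by rw [← hw₀, h]; simp
          have hC0 : C (w : B) = (0 : Polynomial B) := by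
            apply e.symm.injective
            simpa using hw
          exact Subtype.ext (C_injective (by simpa using hC0))
      haveI : Nontrivial S := ⟨⟨0, 1, fun h => zero_ne_one (congrArg Subtype.val h)⟩⟩
      obtain ⟨P', hP'⟩ : ∃ q : Polynomial S, q.map (S.val.toRingHom) = e X := by
        rw [← Polynomial.mem_lifts, Polynomial.lifts_iff_coeff_lifts]
        intro n
        have hn : (e X).coeff n ∈ S := by
          rw [hSdef, Subalgebra.mem_center_iff]
          intro b
          rw [Subalgebra.mem_center_iff] at hPc
          have h1 := congrArg (fun q => q.coeff n) (hPc (C b))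
          simpa [coeff_C_mul, coeff_mul_C] using h1
        exact ⟨⟨(e X).coeff n, hn⟩, rfl⟩
      have hSX : (mapAlgHom (S.val)).comp (aeval P')
          = (aeval (e X) : Polynomial K →ₐ[K] Polynomial B) := by
        apply Polynomial.algHom_ext
        simp only [AlgHom.coe_comp, Function.comp_apply, aeval_X, coe_mapAlgHom]
        exact hP'
      have hPh₀ : aeval P' h₀ = X := by
        apply Polynomial.map_injective (S.val.toRingHom) Subtype.val_injective
        have h3 := DFunLike.congr_fun hSX h₀
        simp only [AlgHom.coe_comp, Function.comp_apply, coe_mapAlgHom] at h3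
        calc Polynomial.map (S.val.toRingHom) (aeval P' h₀) = aeval (e X) h₀ := h3
          _ = X := key
          _ = Polynomial.map (S.val.toRingHom) X := (Polynomial.map_X _).symm
      have hcompdeg : ((h₀.map (algebraMap K S)).comp P').natDegree = 1 := by
        have hc : (h₀.map (algebraMap K S)).comp P' = aeval P' h₀ := by
          rw [Polynomial.comp, Polynomial.eval₂_map, aeval_def]
          rfl
        rw [hc, hPh₀, natDegree_X]
      rw [Polynomial.natDegree_comp] at hcompdeg
      have h4 := Nat.eq_one_of_mul_eq_one_right hcompdeg
      rwa [Polynomial.natDegree_map_eq_of_injective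
        (RingHom.injective (algebraMap K S))] at h4
    -- now construct the isomorphism by evaluation
    obtain ⟨v, hv, u, hvu⟩ := Polynomial.natDegree_eq_one.mp hdeg₀
    set εB : Polynomial B →ₐ[K] B :=
      eval₂AlgHom (AlgHom.id K B) (algebraMap K B u)
        (fun b => (Algebra.commutes u b).symm) with hεB
    set εA : Polynomial A →ₐ[K] A :=
      eval₂AlgHom (AlgHom.id K A) (algebraMap K A 0)
        (fun a => (Algebra.commutes 0 a).symm) with hεA
    have hεBapp : ∀ p : Polynomial B, εB p = eval₂ (RingHom.id B) (algebraMap K B u) p :=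
      fun p => rfl
    have hεAapp : ∀ p : Polynomial A, εA p = eval₂ (RingHom.id A) (algebraMap K A 0) p :=
      fun p => rfl
    -- εB kills e X
    have hPzero : εB (e X) = 0 := by
      have h2 : aeval (εB (e X)) h₀ = εB (aeval (e X) h₀) := aeval_algHom_apply εB (e X) h₀
      rw [key] at h2
      have h3 : εB X = algebraMap K B u := by
        rw [hεBapp, eval₂_X]
      rw [h3, ← hvu] at h2
      simp only [map_add, map_mul, aeval_C, aeval_X] at h2
      nth_rewrite 2 [← zero_add (algebraMap K B u)] at h2
      have h4 := add_right_cancel h2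
      have h5 := congrArg (fun x => algebraMap K B v⁻¹ * x) h4
      simpa [← mul_assoc, ← map_mul, inv_mul_cancel₀ hv] using h5
    -- εA sends e.symm X to the scalar u
    have hsymmX : εA (e.symm X) = algebraMap K A u := by
      rw [← hh₀, hεAapp, Polynomial.eval₂_map, map_zero, Polynomial.eval₂_at_zero]
      have h3 : h₀.coeff 0 = u := by rw [← hvu]; simp
      rw [h3]
      rfl
    set F : A →ₐ[K] B := εB.comp (e.toAlgHom.comp CAlgHom) with hF
    set G : B →ₐ[K] A := εA.comp (e.symm.toAlgHom.comp CAlgHom) with hG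
    have hFapp : ∀ a : A, F a = εB (e (C a)) := fun a => rfl
    have hGapp : ∀ b : B, G b = εA (e.symm (C b)) := fun b => rfl
    have hGF : ∀ a, G (F a) = a := by
      intro a
      obtain ⟨q, hq⟩ := aux_div u (e (C a))
      have h6 := congrArg e.symm hq
      rw [e.symm_apply_apply, map_add, map_mul, map_sub] at h6
      have h7 : e.symm (C (algebraMap K B u)) = C (algebraMap K A u) := by
        calc e.symm (C (algebraMap K B u)) = e.symm (algebraMap K (Polynomial B) u) := by
              rw [Polynomial.algebraMap_apply]
          _ = algebraMap K (Polynomial A) u := e.symm.commutes u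
          _ = C (algebraMap K A u) := by rw [Polynomial.algebraMap_apply]
      rw [h7] at h6
      have h8 := congrArg εA h6
      rw [map_add, map_mul, map_sub, hsymmX] at h8
      have h9 : εA (C (algebraMap K A u)) = algebraMap K A u := by
        rw [hεAapp, eval₂_C]; rfl
      rw [h9, sub_self, zero_mul, zero_add] at h8
      have h10 : εA (C a) = a := by rw [hεAapp, eval₂_C]; rfl
      rw [h10] at h8
      rw [hGapp, hFapp, hεBapp (e (C a))]
      exact h8.symm
    have hFG : ∀ b, F (G b) = b := by
      intro b
      obtain ⟨q, hq⟩ := aux_div (0 : K) (e.symm (C b))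
      have h6 := congrArg e hq
      rw [e.apply_symm_apply, map_add, map_mul, map_sub] at h6
      have h7 : e (C (algebraMap K A 0)) = 0 := by simp
      rw [h7, sub_zero] at h6
      have h8 := congrArg εB h6
      rw [map_add, map_mul, hPzero, zero_mul, zero_add] at h8
      have h9 : εB (C b) = b := by rw [hεBapp, eval₂_C]; rfl
      rw [h9] at h8
      rw [hFapp, hGapp, hεAapp (e.symm (C b))]
      exact h8.symm
    exact ⟨AlgEquiv.ofAlgHom F G (AlgHom.ext hFG) (AlgHom.ext hGF)⟩
end
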